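/- arXiv:2601.19758 — 2 statements merged into one kernel-verified Lean document; each statement's English description precedes it below -/
import Mathlib

section
/- Let G be a group, ω a 2-cocycle on G, λ^ω the twisted left regular representation on ℓ²(G), and let C*_r(G,ω) be the operator-norm closure, inside the bounded operators on ℓ²(G), of the unital star subalgebra generated by {λ^ω_g : g ∈ G}. Then the vector state τ(a) = ⟨δ_e, a δ_e⟩ is tracial on C*_r(G,ω): for all a, b ∈ C*_r(G,ω), one has ⟨δ_e, a(b δ_e)⟩ = ⟨δ_e, b(a δ_e)⟩. -/
set_option linter.unusedSectionVars false
set_option maxHeartbeats 1000000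

/-- A 2-cocycle on a group `G`: a circle-valued map satisfying the cocycle identity
and normalised at the identity. -/
def IsTwoCocycle {G : Type*} [Group G] (ω : G → G → ℂ) : Prop :=
  (∀ x y : G, ‖ω x y‖ = 1) ∧
  (∀ x y z : G, ω y z * ω x (y * z) = ω x y * ω (x * y) z) ∧
  (∀ x : G, ω x 1 = 1) ∧ (∀ y : G, ω 1 y = 1)

/-- The reduced twisted group C*-algebra: the operator-norm closure, inside the bounded
operators on `ℓ²(G)`, of the unital star subalgebra generated by the twisted left regular
representation `{λ^ω_g : g ∈ G}` (here given by the family of unitaries `U`). -/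
noncomputable def reducedTwistedGroupCstarAlgebra {G : Type*} [Group G]
    (U : G → (lp (fun _ : G => ℂ) 2 ≃ₗᵢ[ℂ] lp (fun _ : G => ℂ) 2)) :
    StarSubalgebra ℂ (lp (fun _ : G => ℂ) 2 →L[ℂ] lp (fun _ : G => ℂ) 2) :=
  (StarAlgebra.adjoin ℂ
    {T : lp (fun _ : G => ℂ) 2 →L[ℂ] lp (fun _ : G => ℂ) 2 |
      ∃ g : G, ∀ ξ : lp (fun _ : G => ℂ) 2, T ξ = U g ξ}).topologicalClosure

section Aux

variable {G : Type*} [Group G] [DecidableEq G]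

local notation "ℓ²" => lp (fun _ : G => ℂ) 2

lemma clm_ext_single {T₁ T₂ : ℓ² →L[ℂ] ℓ²}
    (h : ∀ i : G, T₁ (lp.single 2 i 1) = T₂ (lp.single 2 i 1)) : T₁ = T₂ := by
  refine ContinuousLinearMap.ext fun f => ?_
  have hs : HasSum (fun i : G => lp.single 2 i (f i)) f :=
    lp.hasSum_single (by norm_num) f
  have key : ∀ T : ℓ² →L[ℂ] ℓ², HasSum (fun i : G => f i • T (lp.single 2 i 1)) (T f) := by
    intro T
    have h2 := hs.mapL T
    convert h2 using 2 with i
    rw [← map_smul, ← lp.single_smul]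
    norm_num
  have heq : (fun i : G => f i • T₁ (lp.single 2 i 1))
      = fun i : G => f i • T₂ (lp.single 2 i 1) := by
    funext i; rw [h i]
  exact (key T₁).unique (heq ▸ key T₂)

/-- The twisted translation operators as continuous linear maps. -/
noncomputable def twL (U : G → (ℓ² ≃ₗᵢ[ℂ] ℓ²)) (g : G) : ℓ² →L[ℂ] ℓ² :=
  (U g : ℓ² →L[ℂ] ℓ²)

lemma Top_apply (U : G → (ℓ² ≃ₗᵢ[ℂ] ℓ²)) (g : G) (ξ : ℓ²) :
    twL U g ξ = U g ξ := rfl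

lemma omega_inv_symm {ω : G → G → ℂ} (hω : IsTwoCocycle ω) (g : G) : ω g g⁻¹ = ω g⁻¹ g := by
  have := hω.2.1 g g⁻¹ g
  simpa [hω.2.2.1, hω.2.2.2] using this.symm

lemma omega_conj_mul {ω : G → G → ℂ} (hω : IsTwoCocycle ω) (g h : G) :
    (starRingEnd ℂ) (ω g h) * ω g h = 1 := by
  have habs := hω.1 g h
  rw [mul_comm, Complex.mul_conj, Complex.normSq_eq_norm_sq, habs]
  norm_num

lemma T_mul {ω : G → G → ℂ} {U : G → (ℓ² ≃ₗᵢ[ℂ] ℓ²)} (hω : IsTwoCocycle ω)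
    (hU : ∀ g h : G, U g (lp.single 2 h 1) = ω g h • lp.single 2 (g * h) 1) (g h : G) :
    twL U g * twL U h = ω g h • twL U (g * h) := by
  apply clm_ext_single
  intro k
  show U g (U h (lp.single 2 k 1)) = (ω g h • twL U (g*h)) (lp.single 2 k 1)
  rw [hU h k, map_smul, hU g (h * k), ContinuousLinearMap.smul_apply, Top_apply,
    hU (g*h) k, smul_smul, smul_smul, ← mul_assoc g h k, hω.2.1 g h k]

lemma T_one {ω : G → G → ℂ} {U : G → (ℓ² ≃ₗᵢ[ℂ] ℓ²)} (hω : IsTwoCocycle ω)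
    (hU : ∀ g h : G, U g (lp.single 2 h 1) = ω g h • lp.single 2 (g * h) 1) :
    twL U (1 : G) = 1 := by
  apply clm_ext_single
  intro k
  show U 1 (lp.single 2 k 1) = (1 : ℓ² →L[ℂ] ℓ²) (lp.single 2 k 1)
  rw [hU 1 k, hω.2.2.2 k, one_smul, one_mul]
  simp

lemma T_star {ω : G → G → ℂ} {U : G → (ℓ² ≃ₗᵢ[ℂ] ℓ²)} (hω : IsTwoCocycle ω)
    (hU : ∀ g h : G, U g (lp.single 2 h 1) = ω g h • lp.single 2 (g * h) 1) (g : G) :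
    star (twL U g) = (starRingEnd ℂ) (ω g g⁻¹) • twL U g⁻¹ := by
  show star ((U g : ℓ² →L[ℂ] ℓ²)) = _
  rw [LinearIsometryEquiv.star_eq_symm]
  apply clm_ext_single
  intro k
  show (U g).symm (lp.single 2 k 1)
      = ((starRingEnd ℂ) (ω g g⁻¹) • twL U g⁻¹) (lp.single 2 k 1)
  have key : U g (((starRingEnd ℂ) (ω g g⁻¹) • twL U g⁻¹) (lp.single 2 k 1))
      = lp.single 2 k 1 := by
    rw [ContinuousLinearMap.smul_apply, Top_apply, hU g⁻¹ k, map_smul, map_smul,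
      hU g (g⁻¹ * k), smul_smul, smul_smul]
    have hco : ω g⁻¹ k * ω g (g⁻¹ * k) = ω g g⁻¹ := by
      have := hω.2.1 g g⁻¹ k
      simpa [hω.2.2.2] using this
    rw [mul_assoc, hco, omega_conj_mul hω, one_smul, mul_inv_cancel_left]
  conv_lhs => rw [← key, LinearIsometryEquiv.symm_apply_apply]






/-- The linear span of the twisted translations. -/
noncomputable def twSpan (U : G → (ℓ² ≃ₗᵢ[ℂ] ℓ²)) : Submodule ℂ (ℓ² →L[ℂ] ℓ²) :=
  Submodule.span ℂ (Set.range (twL U))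

lemma twL_mem_twSpan (U : G → (ℓ² ≃ₗᵢ[ℂ] ℓ²)) (g : G) : twL U g ∈ twSpan U :=
  Submodule.subset_span ⟨g, rfl⟩

lemma mul_mem_twSpan {ω : G → G → ℂ} {U : G → (ℓ² ≃ₗᵢ[ℂ] ℓ²)} (hω : IsTwoCocycle ω)
    (hU : ∀ g h : G, U g (lp.single 2 h 1) = ω g h • lp.single 2 (g * h) 1)
    {x y : ℓ² →L[ℂ] ℓ²} (hx : x ∈ twSpan U) (hy : y ∈ twSpan U) :
    x * y ∈ twSpan U := by
  induction hx, hy using Submodule.span_induction₂ with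
  | mem_mem x y hx hy =>
    obtain ⟨g, rfl⟩ := hx
    obtain ⟨h, rfl⟩ := hy
    rw [T_mul hω hU g h]
    exact Submodule.smul_mem _ _ (twL_mem_twSpan U (g * h))
  | zero_left y hy => rw [zero_mul]; exact Submodule.zero_mem _
  | zero_right x hx => rw [mul_zero]; exact Submodule.zero_mem _
  | add_left x y z _ _ _ h1 h2 => rw [add_mul]; exact Submodule.add_mem _ h1 h2
  | add_right x y z _ _ _ h1 h2 => rw [mul_add]; exact Submodule.add_mem _ h1 h2
  | smul_left r x y _ _ h => rw [smul_mul_assoc]; exact Submodule.smul_mem _ _ h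
  | smul_right r x y _ _ h => rw [mul_smul_comm]; exact Submodule.smul_mem _ _ h

lemma star_mem_twSpan {ω : G → G → ℂ} {U : G → (ℓ² ≃ₗᵢ[ℂ] ℓ²)} (hω : IsTwoCocycle ω)
    (hU : ∀ g h : G, U g (lp.single 2 h 1) = ω g h • lp.single 2 (g * h) 1)
    {x : ℓ² →L[ℂ] ℓ²} (hx : x ∈ twSpan U) : star x ∈ twSpan U := by
  induction hx using Submodule.span_induction with
  | mem x hx =>
    obtain ⟨g, rfl⟩ := hx
    rw [T_star hω hU g]
    exact Submodule.smul_mem _ _ (twL_mem_twSpan U g⁻¹)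
  | zero => rw [star_zero]; exact Submodule.zero_mem _
  | add x y _ _ h1 h2 => rw [star_add]; exact Submodule.add_mem _ h1 h2
  | smul r x _ h => rw [star_smul]; exact Submodule.smul_mem _ _ h

/-- The span of the twisted translations as a star subalgebra. -/
noncomputable def twAlg {ω : G → G → ℂ} {U : G → (ℓ² ≃ₗᵢ[ℂ] ℓ²)} (hω : IsTwoCocycle ω)
    (hU : ∀ g h : G, U g (lp.single 2 h 1) = ω g h • lp.single 2 (g * h) 1) :
    StarSubalgebra ℂ (ℓ² →L[ℂ] ℓ²) where
  carrier := twSpan U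
  mul_mem' := fun hx hy => mul_mem_twSpan hω hU hx hy
  one_mem' := by rw [← T_one hω hU]; exact twL_mem_twSpan U 1
  add_mem' := fun hx hy => Submodule.add_mem _ hx hy
  zero_mem' := Submodule.zero_mem _
  algebraMap_mem' := fun r => by
    have h1 : (1 : ℓ² →L[ℂ] ℓ²) ∈ twSpan U := T_one hω hU ▸ twL_mem_twSpan U 1
    simpa [Algebra.algebraMap_eq_smul_one] using Submodule.smul_mem (twSpan U) r h1
  star_mem' := fun hx => star_mem_twSpan hω hU hx

lemma inner_delta_eq (ξ : ℓ²) :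
    (inner (𝕜 := ℂ) (lp.single 2 (1 : G) 1) ξ) = ξ 1 := by
  rw [lp.inner_single_left]
  simp [RCLike.inner_apply]

lemma twL_twL_delta {ω : G → G → ℂ} {U : G → (ℓ² ≃ₗᵢ[ℂ] ℓ²)} (hω : IsTwoCocycle ω)
    (hU : ∀ g h : G, U g (lp.single 2 h 1) = ω g h • lp.single 2 (g * h) 1) (g h : G) :
    twL U g (twL U h (lp.single 2 (1 : G) 1)) = ω g h • lp.single 2 (g * h) 1 := by
  rw [Top_apply, Top_apply, hU h 1, map_smul, hU g (h * 1)]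
  rw [hω.2.2.1 h, one_smul, mul_one]

lemma trace_comm_gen {ω : G → G → ℂ} {U : G → (ℓ² ≃ₗᵢ[ℂ] ℓ²)} (hω : IsTwoCocycle ω)
    (hU : ∀ g h : G, U g (lp.single 2 h 1) = ω g h • lp.single 2 (g * h) 1) (g h : G) :
    inner (𝕜 := ℂ) (lp.single 2 (1 : G) 1) (twL U g (twL U h (lp.single 2 (1 : G) 1)))
      = inner (𝕜 := ℂ) (lp.single 2 (1 : G) 1) (twL U h (twL U g (lp.single 2 (1 : G) 1))) := by
  rw [twL_twL_delta hω hU g h, twL_twL_delta hω hU h g, inner_delta_eq, inner_delta_eq]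
  rw [lp.coeFn_smul, lp.coeFn_smul, Pi.smul_apply, Pi.smul_apply]
  by_cases hc : g * h = 1
  · have hg : g = h⁻¹ := eq_inv_of_mul_eq_one_left hc
    subst hg
    rw [inv_mul_cancel, mul_inv_cancel, omega_inv_symm hω h]
  · have hc' : ¬ (h * g = 1) := by
      intro hh
      exact hc (by rw [eq_inv_of_mul_eq_one_left hh]; simp)
    have h1 : (1 : G) ≠ g * h := fun e => hc e.symm
    have h2 : (1 : G) ≠ h * g := fun e => hc' e.symm
    rw [lp.single_apply_ne 2 (g * h) _ h1, lp.single_apply_ne 2 (h * g) _ h2]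
    simp

lemma trace_comm_span {ω : G → G → ℂ} {U : G → (ℓ² ≃ₗᵢ[ℂ] ℓ²)} (hω : IsTwoCocycle ω)
    (hU : ∀ g h : G, U g (lp.single 2 h 1) = ω g h • lp.single 2 (g * h) 1)
    {x y : ℓ² →L[ℂ] ℓ²} (hx : x ∈ twSpan U) (hy : y ∈ twSpan U) :
    inner (𝕜 := ℂ) (lp.single 2 (1 : G) 1) (x (y (lp.single 2 (1 : G) 1)))
      = inner (𝕜 := ℂ) (lp.single 2 (1 : G) 1) (y (x (lp.single 2 (1 : G) 1))) := by
  induction hx, hy using Submodule.span_induction₂ with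
  | mem_mem x y hx hy =>
    obtain ⟨g, rfl⟩ := hx
    obtain ⟨h, rfl⟩ := hy
    exact trace_comm_gen hω hU g h
  | zero_left y hy => simp
  | zero_right x hx => simp
  | add_left x y z _ _ _ h1 h2 =>
    simp only [ContinuousLinearMap.add_apply, map_add, inner_add_right, h1, h2]
  | add_right x y z _ _ _ h1 h2 =>
    simp only [ContinuousLinearMap.add_apply, map_add, inner_add_right, h1, h2]
  | smul_left r x y _ _ h =>
    simp only [ContinuousLinearMap.smul_apply, map_smul, inner_smul_right, h]
  | smul_right r x y _ _ h =>
    simp only [ContinuousLinearMap.smul_apply, map_smul, inner_smul_right, h]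

end Aux

theorem canonical_trace_is_tracial
    {G : Type*} [Group G] [DecidableEq G] (ω : G → G → ℂ) (hω : IsTwoCocycle ω)
    (U : G → (lp (fun _ : G => ℂ) 2 ≃ₗᵢ[ℂ] lp (fun _ : G => ℂ) 2))
    (hU : ∀ g h : G, U g (lp.single 2 h 1) = ω g h • lp.single 2 (g * h) 1) :
    ∀ a ∈ reducedTwistedGroupCstarAlgebra U, ∀ b ∈ reducedTwistedGroupCstarAlgebra U,
      inner (𝕜 := ℂ) (lp.single 2 (1 : G) 1) (a (b (lp.single 2 (1 : G) 1))) =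
        inner (𝕜 := ℂ) (lp.single 2 (1 : G) 1) (b (a (lp.single 2 (1 : G) 1))) := by
  intro a ha b hb
  set ℓ2 := lp (fun _ : G => ℂ) 2 with hℓ2
  set A := StarAlgebra.adjoin ℂ
    {T : ℓ2 →L[ℂ] ℓ2 | ∃ g : G, ∀ ξ : ℓ2, T ξ = U g ξ} with hA
  have ha' : a ∈ closure (A : Set (ℓ2 →L[ℂ] ℓ2)) := ha
  have hb' : b ∈ closure (A : Set (ℓ2 →L[ℂ] ℓ2)) := hb
  have hle : ∀ x ∈ A, x ∈ twSpan U := by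
    intro x hx
    refine StarAlgebra.adjoin_le (S := twAlg hω hU) ?_ hx
    rintro T ⟨g, hg⟩
    have hT : T = twL U g := ContinuousLinearMap.ext fun ξ => hg ξ
    rw [hT]
    exact twL_mem_twSpan U g
  set δ : ℓ2 := lp.single 2 (1 : G) 1 with hδ
  have cont1 : ∀ ξ : ℓ2, Continuous fun x : ℓ2 →L[ℂ] ℓ2 => x ξ := fun ξ =>
    (ContinuousLinearMap.apply ℂ ℓ2 ξ).continuous
  have key1 : ∀ y ∈ twSpan U, ∀ x ∈ closure (A : Set (ℓ2 →L[ℂ] ℓ2)),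
      inner (𝕜 := ℂ) δ (x (y δ)) = inner (𝕜 := ℂ) δ (y (x δ)) := by
    intro y hy x hx
    have hsub : (A : Set (ℓ2 →L[ℂ] ℓ2)) ⊆
        {x : ℓ2 →L[ℂ] ℓ2 | inner (𝕜 := ℂ) δ (x (y δ)) = inner (𝕜 := ℂ) δ (y (x δ))} :=
      fun z hz => trace_comm_span hω hU (hle z hz) hy
    have hclosed : IsClosed
        {x : ℓ2 →L[ℂ] ℓ2 | inner (𝕜 := ℂ) δ (x (y δ)) = inner (𝕜 := ℂ) δ (y (x δ))} := by
      apply isClosed_eq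
      · exact continuous_const.inner (cont1 (y δ))
      · exact continuous_const.inner (y.continuous.comp (cont1 δ))
    exact closure_minimal hsub hclosed hx
  have key2 : ∀ y ∈ closure (A : Set (ℓ2 →L[ℂ] ℓ2)),
      inner (𝕜 := ℂ) δ (a (y δ)) = inner (𝕜 := ℂ) δ (y (a δ)) := by
    intro y hy
    have hsub : (A : Set (ℓ2 →L[ℂ] ℓ2)) ⊆
        {y : ℓ2 →L[ℂ] ℓ2 | inner (𝕜 := ℂ) δ (a (y δ)) = inner (𝕜 := ℂ) δ (y (a δ))} :=
      fun z hz => key1 z (hle z hz) a ha'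
    have hclosed : IsClosed
        {y : ℓ2 →L[ℂ] ℓ2 | inner (𝕜 := ℂ) δ (a (y δ)) = inner (𝕜 := ℂ) δ (y (a δ))} := by
      apply isClosed_eq
      · exact continuous_const.inner (a.continuous.comp (cont1 δ))
      · exact continuous_const.inner (cont1 (a δ))
    exact closure_minimal hsub hclosed hy
  exact key2 b hb'
end

section
/- Let G be a group, ω a 2-cocycle on G, λ^ω the twisted left regular representation on ℓ²(G), and let C*_r(G,ω) be the operator-norm closure, inside the bounded operators on ℓ²(G), of the unital star subalgebra generated by {λ^ω_g : g ∈ G}. Then the canonical trace τ(a) = ⟨δ_e, a δ_e⟩ is faithful on C*_r(G,ω): for every a ∈ C*_r(G,ω), if a(δ_e) = 0 (equivalently τ(a*a) = 0), then a = 0. -/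
open scoped ENNReal


namespace TwistedAux

variable {G : Type*} [Group G] [DecidableEq G]

noncomputable abbrev Hsp (G : Type*) := lp (fun _ : G => ℂ) 2

theorem memℓp_shift (ω : G → G → ℂ) (habs : ∀ x y : G, ‖ω x y‖ = 1)
    (h : G) (f : Hsp G) :
    Memℓp (fun x : G => ω (x * h⁻¹) h * f (x * h⁻¹)) 2 := by
  have hpr : 0 < (2 : ℝ≥0∞).toReal := by norm_num
  apply memℓp_gen
  have hs := (lp.memℓp f).summable hpr
  have := ((Equiv.mulRight h⁻¹).summable_iff
    (f := fun y : G => ‖f y‖ ^ (2 : ℝ≥0∞).toReal)).2 hs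
  convert this using 2 with x
  simp only [Function.comp, Equiv.coe_mulRight]
  rw [norm_mul]
  have : ‖ω (x * h⁻¹) h‖ = 1 := by exact habs _ _
  rw [this, one_mul]

/-- The twisted right translation operator, as a linear map. -/
noncomputable def Rlin (ω : G → G → ℂ) (habs : ∀ x y : G, ‖ω x y‖ = 1)
    (h : G) : Hsp G →ₗ[ℂ] Hsp G where
  toFun f := ⟨fun x : G => ω (x * h⁻¹) h * f (x * h⁻¹), memℓp_shift ω habs h f⟩
  map_add' f g := by
    apply lp.ext
    funext x
    simp only [lp.coeFn_add, Pi.add_apply]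
    ring
  map_smul' c f := by
    apply lp.ext
    funext x
    simp only [lp.coeFn_smul, Pi.smul_apply, RingHom.id_apply, smul_eq_mul]
    ring

theorem Rlin_apply (ω : G → G → ℂ) (habs : ∀ x y : G, ‖ω x y‖ = 1)
    (h : G) (f : Hsp G) (x : G) :
    (Rlin ω habs h f : ∀ _ : G, ℂ) x = ω (x * h⁻¹) h * f (x * h⁻¹) := rfl

theorem norm_Rlin (ω : G → G → ℂ) (habs : ∀ x y : G, ‖ω x y‖ = 1)
    (h : G) (f : Hsp G) : ‖Rlin ω habs h f‖ = ‖f‖ := by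
  have hpr : 0 < (2 : ℝ≥0∞).toReal := by norm_num
  rw [lp.norm_eq_tsum_rpow hpr, lp.norm_eq_tsum_rpow hpr]
  congr 1
  rw [← Equiv.tsum_eq (Equiv.mulRight h⁻¹) (fun y : G => ‖f y‖ ^ (2 : ℝ≥0∞).toReal)]
  apply tsum_congr
  intro x
  simp only [Equiv.coe_mulRight, Rlin_apply]
  rw [norm_mul]
  have h1 : ‖ω (x * h⁻¹) h‖ = 1 := by exact habs _ _
  rw [h1, one_mul]

/-- The twisted right translation operator. -/
noncomputable def R (ω : G → G → ℂ) (habs : ∀ x y : G, ‖ω x y‖ = 1)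
    (h : G) : Hsp G →L[ℂ] Hsp G :=
  LinearMap.mkContinuous (Rlin ω habs h) 1
    (fun f => by rw [norm_Rlin, one_mul])

theorem R_apply (ω : G → G → ℂ) (habs : ∀ x y : G, ‖ω x y‖ = 1)
    (h : G) (f : Hsp G) (x : G) :
    (R ω habs h f : ∀ _ : G, ℂ) x = ω (x * h⁻¹) h * f (x * h⁻¹) := rfl

theorem R_single (ω : G → G → ℂ) (habs : ∀ x y : G, ‖ω x y‖ = 1)
    (h g : G) :
    R ω habs h (lp.single 2 g 1) = ω g h • lp.single 2 (g * h) 1 := by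
  apply lp.ext
  funext x
  rw [R_apply, lp.coeFn_smul, Pi.smul_apply, smul_eq_mul]
  by_cases hx : x = g * h
  · subst hx
    rw [lp.single_apply_self, mul_one]
    have : g * h * h⁻¹ = g := by group
    rw [this, lp.single_apply_self, mul_one]
  · rw [lp.single_apply_ne _ _ _ hx, mul_zero]
    have : x * h⁻¹ ≠ g := by
      intro hc; apply hx; rw [← hc]; group
    rw [lp.single_apply_ne _ _ _ this, mul_zero]

/-- Continuous linear maps agreeing on the standard basis agree. -/
theorem clm_ext_single {A B : Hsp G →L[ℂ] Hsp G}
    (hAB : ∀ g : G, A (lp.single 2 g 1) = B (lp.single 2 g 1)) : A = B := by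
  refine ContinuousLinearMap.ext fun f => ?_
  have hf : HasSum (fun i : G => lp.single 2 i (f i)) f :=
    lp.hasSum_single ENNReal.ofNat_ne_top f
  have hsingle : ∀ i : G, lp.single (E := fun _ : G => ℂ) 2 i (f i)
      = f i • lp.single 2 i 1 := by
    intro i
    have := lp.single_smul (E := fun _ : G => ℂ) 2 i (f i) (1 : ℂ)
    rw [smul_eq_mul, mul_one] at this
    exact this
  have hA : HasSum (fun i : G => A (lp.single 2 i (f i))) (A f) := A.hasSum hf
  have hB : HasSum (fun i : G => B (lp.single 2 i (f i))) (B f) := B.hasSum hf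
  refine hA.unique ?_
  convert hB using 2 with i
  rw [hsingle, map_smul, map_smul, hAB]

end TwistedAux

set_option maxHeartbeats 1000000 in
theorem canonical_trace_is_faithful
    {G : Type*} [Group G] [DecidableEq G] (ω : G → G → ℂ) (hω : IsTwoCocycle ω)
    (U : G → (lp (fun _ : G => ℂ) 2 ≃ₗᵢ[ℂ] lp (fun _ : G => ℂ) 2))
    (hU : ∀ g h : G, U g (lp.single 2 h 1) = ω g h • lp.single 2 (g * h) 1) :
    ∀ a ∈ reducedTwistedGroupCstarAlgebra U, a (lp.single 2 (1 : G) 1) = 0 → a = 0 := by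
  obtain ⟨habs, hcoc, hone, hone'⟩ := hω
  intro a ha ha0
  set Sgen : Set (lp (fun _ : G => ℂ) 2 →L[ℂ] lp (fun _ : G => ℂ) 2) :=
    {T | ∃ g : G, ∀ ξ : lp (fun _ : G => ℂ) 2, T ξ = U g ξ} with hSgen
  set C : Subalgebra ℂ (lp (fun _ : G => ℂ) 2 →L[ℂ] lp (fun _ : G => ℂ) 2) :=
    Subalgebra.centralizer ℂ (Set.range (TwistedAux.R ω habs)) with hC
  -- each generator commutes with every R h
  have hgen : ∀ T ∈ Sgen, ∀ h : G, T * TwistedAux.R ω habs h = TwistedAux.R ω habs h * T := by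
    rintro T ⟨g, hTg⟩ h
    apply TwistedAux.clm_ext_single
    intro k
    rw [ContinuousLinearMap.mul_apply, ContinuousLinearMap.mul_apply,
      TwistedAux.R_single, map_smul, hTg, hU, hTg, hU, map_smul,
      TwistedAux.R_single, smul_smul, smul_smul, hcoc g k h, mul_assoc]
  -- star of each generator commutes with every R h
  have hgenstar : ∀ T ∈ Sgen, ∀ h : G,
      star T * TwistedAux.R ω habs h = TwistedAux.R ω habs h * star T := by
    rintro T ⟨g, hTg⟩ h
    -- star T is the continuous linear map of (U g).symm
    set S : lp (fun _ : G => ℂ) 2 →L[ℂ] lp (fun _ : G => ℂ) 2 :=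
      ((U g).symm.toContinuousLinearEquiv : lp (fun _ : G => ℂ) 2 →L[ℂ] lp (fun _ : G => ℂ) 2)
      with hS
    have hSapp : ∀ ξ, S ξ = (U g).symm ξ := fun ξ => rfl
    have hstar : star T = S := by
      rw [ContinuousLinearMap.star_eq_adjoint]
      refine ((ContinuousLinearMap.eq_adjoint_iff S T).2 fun x y => ?_).symm
      rw [hSapp, hTg]
      calc inner ℂ ((U g).symm x) y
          = inner ℂ (U g ((U g).symm x)) (U g y) := ((U g).inner_map_map _ _).symm
        _ = (inner ℂ x (U g y) : ℂ) := by rw [(U g).apply_symm_apply]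
    have hST : S * T = 1 := by
      refine ContinuousLinearMap.ext fun ξ => ?_
      rw [ContinuousLinearMap.mul_apply, hTg, hSapp, ContinuousLinearMap.one_apply,
        (U g).symm_apply_apply]
    have hTS : T * S = 1 := by
      refine ContinuousLinearMap.ext fun ξ => ?_
      rw [ContinuousLinearMap.mul_apply, hSapp, hTg, ContinuousLinearMap.one_apply,
        (U g).apply_symm_apply]
    have hTR := hgen T ⟨g, hTg⟩ h
    rw [hstar]
    calc S * TwistedAux.R ω habs h
        = S * (TwistedAux.R ω habs h * (T * S)) := by rw [hTS, mul_one]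
      _ = S * ((TwistedAux.R ω habs h * T) * S) := by noncomm_ring
      _ = S * ((T * TwistedAux.R ω habs h) * S) := by rw [hTR]
      _ = (S * T) * (TwistedAux.R ω habs h * S) := by noncomm_ring
      _ = TwistedAux.R ω habs h * S := by rw [hST, one_mul]
  -- the centralizer is closed
  have hclosed : IsClosed (C : Set (lp (fun _ : G => ℂ) 2 →L[ℂ] lp (fun _ : G => ℂ) 2)) := by
    have : (C : Set (lp (fun _ : G => ℂ) 2 →L[ℂ] lp (fun _ : G => ℂ) 2)) =
        ⋂ h : G, {b | TwistedAux.R ω habs h * b = b * TwistedAux.R ω habs h} := by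
      ext b
      simp only [Set.mem_iInter, Set.mem_setOf_eq, SetLike.mem_coe]
      rw [Subalgebra.mem_centralizer_iff]
      constructor
      · intro hb h; exact hb _ ⟨h, rfl⟩
      · rintro hb _ ⟨h, rfl⟩; exact hb h
    rw [this]
    exact isClosed_iInter fun h =>
      isClosed_eq (continuous_mul_left _) (continuous_mul_right _)
  -- the adjoin is contained in the centralizer
  have hsub : (StarAlgebra.adjoin ℂ Sgen : Set (lp (fun _ : G => ℂ) 2 →L[ℂ] lp (fun _ : G => ℂ) 2))
      ⊆ (C : Set (lp (fun _ : G => ℂ) 2 →L[ℂ] lp (fun _ : G => ℂ) 2)) := by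
    intro x hx
    have hx' : x ∈ Algebra.adjoin ℂ (Sgen ∪ star Sgen) := by
      rw [← StarAlgebra.adjoin_toSubalgebra]
      exact hx
    have hle : Algebra.adjoin ℂ (Sgen ∪ star Sgen) ≤ C := by
      rw [Algebra.adjoin_le_iff]
      rintro T (hT | hT)
      · rw [SetLike.mem_coe, Subalgebra.mem_centralizer_iff]
        rintro _ ⟨h, rfl⟩
        exact (hgen T hT h).symm
      · obtain ⟨g, hg⟩ := hT
        rw [SetLike.mem_coe, Subalgebra.mem_centralizer_iff]
        rintro _ ⟨h, rfl⟩
        have hcs := hgenstar (star T) ⟨g, hg⟩ h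
        rw [star_star] at hcs
        exact hcs.symm
    exact hle hx'
  -- a lies in the centralizer
  have haC : a ∈ C := by
    have : a ∈ closure (StarAlgebra.adjoin ℂ Sgen :
        Set (lp (fun _ : G => ℂ) 2 →L[ℂ] lp (fun _ : G => ℂ) 2)) := ha
    exact closure_minimal hsub hclosed this
  have hacomm : ∀ h : G, TwistedAux.R ω habs h * a = a * TwistedAux.R ω habs h := by
    intro h
    exact (Subalgebra.mem_centralizer_iff ℂ).1 haC _ ⟨h, rfl⟩
  -- a kills every basis vector
  have hkill : ∀ k : G, a (lp.single 2 k 1) = 0 := by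
    intro k
    have h1 : TwistedAux.R ω habs k (lp.single 2 (1 : G) 1) = lp.single 2 k 1 := by
      rw [TwistedAux.R_single, hone' k, one_smul, one_mul]
    calc a (lp.single 2 k 1) = a (TwistedAux.R ω habs k (lp.single 2 (1 : G) 1)) := by rw [h1]
      _ = (a * TwistedAux.R ω habs k) (lp.single 2 (1 : G) 1) := rfl
      _ = (TwistedAux.R ω habs k * a) (lp.single 2 (1 : G) 1) := by rw [hacomm]
      _ = TwistedAux.R ω habs k (a (lp.single 2 (1 : G) 1)) := rfl
      _ = 0 := by rw [ha0, map_zero]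
  apply TwistedAux.clm_ext_single (B := 0)
  intro g
  rw [hkill, ContinuousLinearMap.zero_apply]
end
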